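/- arXiv:1401.1296 — 3 statements merged into one kernel-verified Lean document; each statement's English description precedes it below -/
import Mathlib

section
/- For parameters ν > 0, a > 0, 0 < p < 1 + ν, there exists a constant C > 0 (depending on a, ν, p but not on t) such that for all t ≥ 1, (2t)^{-p} e^{-a²/(2t)} Σ_{n=0}^∞ a^{2n} Γ(n+ν+1-p) / (Γ(n+1) Γ(n+ν+1) (2t)^n) ≤ (Γ(1+ν-p)/Γ(1+ν)) (2t)^{-p} + C t^{-1-p}. -/
open Real

lemma Gamma_le_one_aux {x : ℝ} (h1 : 1 ≤ x) (h2 : x ≤ 2) : Real.Gamma x ≤ 1 := by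
  have hx : x ∈ segment ℝ (1:ℝ) 2 := by
    rw [segment_eq_Icc one_le_two]; exact ⟨h1, h2⟩
  have h := Real.convexOn_Gamma.le_on_segment (x := 1) (y := 2)
    (by norm_num) (by norm_num) hx
  rwa [Real.Gamma_one, Real.Gamma_two, max_self] at h

lemma Gamma_mono_aux {x y : ℝ} (h1 : 1 ≤ x) (h2 : 2 ≤ y) (hxy : x ≤ y) :
    Real.Gamma x ≤ Real.Gamma y := by
  rcases le_or_gt x 2 with h | h
  · calc Real.Gamma x ≤ 1 := Gamma_le_one_aux h1 h
      _ = Real.Gamma 2 := Real.Gamma_two.symm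
      _ ≤ Real.Gamma y := Real.Gamma_strictMonoOn_Ici.monotoneOn (show (2:ℝ) ∈ Set.Ici 2 from le_refl (2:ℝ)) h2 h2
  · exact Real.Gamma_strictMonoOn_Ici.monotoneOn h.le h2 hxy

set_option maxHeartbeats 1600000 in
/-- Upper bound for the series expression for the negative moment of a Bessel
process: it equals the leading term up to an error `C * t^(-1-p)`, uniformly for
`t ≥ 1`. -/
theorem series_upper_bound (ν a p : ℝ) (hν : 0 < ν) (ha : 0 < a)
    (hp0 : 0 < p) (hp1 : p < 1 + ν) :
    ∃ C > 0, ∀ t ≥ (1 : ℝ),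
      (2 * t) ^ (-p) * Real.exp (-a ^ 2 / (2 * t)) *
        ∑' n : ℕ, a ^ (2 * n) * Real.Gamma (n + ν + 1 - p) /
          (Real.Gamma (n + 1) * Real.Gamma (n + ν + 1) * (2 * t) ^ n) ≤
      Real.Gamma (1 + ν - p) / Real.Gamma (1 + ν) * (2 * t) ^ (-p) +
        C * t ^ (-1 - p) := by
  have hνp : 0 < 1 + ν - p := by linarith
  set K : ℝ := Real.Gamma (1 + ν - p) / Real.Gamma (1 + ν) with hK
  have hKpos : 0 < K := div_pos (Real.Gamma_pos_of_pos hνp)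
    (Real.Gamma_pos_of_pos (by linarith))
  set g : ℕ → ℝ := fun n => a ^ (2 * (n + 1)) / (Real.Gamma (n + 2) * 2 ^ n) with hg
  have hΓnat : ∀ n : ℕ, Real.Gamma ((n : ℝ) + 2) = (Nat.factorial (n + 1) : ℝ) := by
    intro n
    have h := Real.Gamma_nat_eq_factorial (n + 1)
    rw [← h]
    push_cast
    ring_nf
  have hgpos : ∀ n, 0 < g n := by
    intro n
    have := Real.Gamma_pos_of_pos (show (0:ℝ) < (n:ℝ) + 2 by positivity)
    positivity
  have hgsum : Summable g := by
    have hmaj : Summable (fun n => a ^ 2 * ((a ^ 2 / 2) ^ n / (Nat.factorial n : ℝ))) :=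
      (Real.summable_pow_div_factorial _).mul_left _
    refine Summable.of_nonneg_of_le (fun n => (hgpos n).le) (fun n => ?_) hmaj
    show a ^ (2 * (n + 1)) / (Real.Gamma ((n:ℝ) + 2) * 2 ^ n) ≤
      a ^ 2 * ((a ^ 2 / 2) ^ n / (Nat.factorial n : ℝ))
    rw [hΓnat n]
    have h1 : a ^ (2 * (n + 1)) = a ^ 2 * (a ^ 2) ^ n := by
      rw [pow_mul, pow_succ, mul_comm]
    have h2 : (Nat.factorial n : ℝ) ≤ (Nat.factorial (n + 1) : ℝ) := by
      exact_mod_cast Nat.factorial_le (Nat.le_succ n)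
    have hfn : (0:ℝ) < (Nat.factorial n : ℝ) := by positivity
    have hfn1 : (0:ℝ) < (Nat.factorial (n + 1) : ℝ) := by positivity
    rw [h1, div_pow, mul_div_assoc, div_div]
    have hd : (2:ℝ) ^ n * (Nat.factorial n : ℝ) ≤ (Nat.factorial (n + 1) : ℝ) * 2 ^ n := by
      rw [mul_comm]
      gcongr
    gcongr
  set S : ℝ := ∑' n, g n with hS
  have hS0 : 0 ≤ S := tsum_nonneg fun n => (hgpos n).le
  refine ⟨S + 1, by linarith, fun t ht => ?_⟩
  have ht0 : (0:ℝ) < t := lt_of_lt_of_le one_pos ht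
  have h2t0 : (0:ℝ) < 2 * t := by linarith
  set f : ℕ → ℝ := fun n => a ^ (2 * n) * Real.Gamma ((n : ℝ) + ν + 1 - p) /
      (Real.Gamma ((n : ℝ) + 1) * Real.Gamma ((n : ℝ) + ν + 1) * (2 * t) ^ n) with hf
  have hfpos : ∀ n, 0 ≤ f n := by
    intro n
    have h1 : 0 < Real.Gamma ((n : ℝ) + ν + 1 - p) :=
      Real.Gamma_pos_of_pos (by have : (0:ℝ) ≤ (n:ℝ) := Nat.cast_nonneg n; linarith)
    have h2 : 0 < Real.Gamma ((n : ℝ) + 1) := Real.Gamma_pos_of_pos (by positivity)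
    have h3 : 0 < Real.Gamma ((n : ℝ) + ν + 1) := Real.Gamma_pos_of_pos (by positivity)
    rw [hf]
    positivity
  have key : ∀ n : ℕ, f (n + 1) ≤ g n * t⁻¹ := by
    intro n
    have hn0 : (0:ℝ) ≤ (n:ℝ) := n.cast_nonneg
    have hG1 : 0 < Real.Gamma ((n:ℝ) + 2) := Real.Gamma_pos_of_pos (by positivity)
    have hG3 : 0 < Real.Gamma ((n:ℝ) + ν + 2) := Real.Gamma_pos_of_pos (by positivity)
    have hGam : Real.Gamma ((n:ℝ) + ν + 2 - p) ≤ Real.Gamma ((n:ℝ) + ν + 2) :=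
      Gamma_mono_aux (by linarith) (by linarith) (by linarith)
    have hGam0 : 0 < Real.Gamma ((n:ℝ) + ν + 2 - p) :=
      Real.Gamma_pos_of_pos (by linarith)
    have hpow : (2:ℝ) ^ n * t ≤ (2 * t) ^ (n + 1) := by
      rw [mul_pow]
      have h1 : (2:ℝ) ^ n ≤ 2 ^ (n + 1) := by gcongr <;> norm_num
      have h2 : t ≤ t ^ (n + 1) := le_self_pow₀ ht (Nat.succ_ne_zero n)
      calc (2:ℝ) ^ n * t ≤ 2 ^ (n + 1) * t ^ (n + 1) := by gcongr
        _ = 2 ^ (n + 1) * t ^ (n + 1) := rfl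
    have hcast : f (n + 1) = a ^ (2 * (n + 1)) * Real.Gamma ((n:ℝ) + ν + 2 - p) /
        (Real.Gamma ((n:ℝ) + 2) * Real.Gamma ((n:ℝ) + ν + 2) * (2 * t) ^ (n + 1)) := by
      rw [hf]
      push_cast
      ring_nf
    rw [hcast]
    calc a ^ (2 * (n + 1)) * Real.Gamma ((n:ℝ) + ν + 2 - p) /
        (Real.Gamma ((n:ℝ) + 2) * Real.Gamma ((n:ℝ) + ν + 2) * (2 * t) ^ (n + 1))
        ≤ a ^ (2 * (n + 1)) * Real.Gamma ((n:ℝ) + ν + 2) /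
        (Real.Gamma ((n:ℝ) + 2) * Real.Gamma ((n:ℝ) + ν + 2) * (2 * t) ^ (n + 1)) := by
          gcongr
      _ = a ^ (2 * (n + 1)) / (Real.Gamma ((n:ℝ) + 2) * (2 * t) ^ (n + 1)) := by
          field_simp
      _ ≤ a ^ (2 * (n + 1)) / (Real.Gamma ((n:ℝ) + 2) * (2 ^ n * t)) := by
          gcongr
      _ = g n * t⁻¹ := by
          rw [hg]
          field_simp
  have hsum_shift : Summable (fun n => f (n + 1)) :=
    Summable.of_nonneg_of_le (fun n => hfpos _) key (hgsum.mul_right t⁻¹)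
  have hfsum : Summable f := (summable_nat_add_iff 1).mp hsum_shift
  have hsplit : ∑' n, f n = f 0 + ∑' n, f (n + 1) := hfsum.tsum_eq_zero_add
  have hf0 : f 0 = K := by
    rw [hf, hK]
    norm_num [Real.Gamma_one]
    congr 2 <;> ring
  have hT : ∑' n, f (n + 1) ≤ S * t⁻¹ := by
    rw [hS, ← tsum_mul_right]
    exact Summable.tsum_le_tsum key hsum_shift (hgsum.mul_right t⁻¹)
  have hT0 : 0 ≤ ∑' n, f (n + 1) := tsum_nonneg fun n => hfpos _
  have hA0 : (0:ℝ) ≤ (2 * t) ^ (-p) := Real.rpow_nonneg h2t0.le _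
  have hE : Real.exp (-a ^ 2 / (2 * t)) ≤ 1 := by
    rw [Real.exp_le_one_iff]
    exact div_nonpos_of_nonpos_of_nonneg (by nlinarith [sq_nonneg a]) h2t0.le
  have hE0 : 0 ≤ Real.exp (-a ^ 2 / (2 * t)) := (Real.exp_pos _).le
  have step1 : (2 * t) ^ (-p) * Real.exp (-a ^ 2 / (2 * t)) * ∑' n, f n ≤
      (2 * t) ^ (-p) * (K + S * t⁻¹) := by
    rw [hsplit, hf0]
    calc (2 * t) ^ (-p) * Real.exp (-a ^ 2 / (2 * t)) * (K + ∑' n, f (n + 1))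
        ≤ (2 * t) ^ (-p) * 1 * (K + S * t⁻¹) := by
          gcongr
      _ = (2 * t) ^ (-p) * (K + S * t⁻¹) := by ring
  have hAle : (2 * t) ^ (-p) ≤ t ^ (-p) :=
    Real.rpow_le_rpow_of_nonpos ht0 (by linarith) (by linarith)
  have hrpow : t ^ (-p) * t⁻¹ = t ^ (-1 - p) := by
    rw [show (-1 - p : ℝ) = -p + -1 by ring, Real.rpow_add ht0, Real.rpow_neg_one]
  have step2 : (2 * t) ^ (-p) * (K + S * t⁻¹) ≤ K * (2 * t) ^ (-p) + (S + 1) * t ^ (-1 - p) := by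
    have h1 : (2 * t) ^ (-p) * (S * t⁻¹) ≤ t ^ (-p) * (S * t⁻¹) := by
      have : 0 ≤ S * t⁻¹ := by positivity
      exact mul_le_mul_of_nonneg_right hAle this
    have h2 : t ^ (-p) * (S * t⁻¹) = S * t ^ (-1 - p) := by
      rw [← hrpow]; ring
    have h3 : S * t ^ (-1 - p) ≤ (S + 1) * t ^ (-1 - p) :=
      mul_le_mul_of_nonneg_right (by linarith) (Real.rpow_nonneg ht0.le _)
    nlinarith [Real.rpow_nonneg ht0.le (-1 - p)]
  calc (2 * t) ^ (-p) * Real.exp (-a ^ 2 / (2 * t)) *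
        ∑' n : ℕ, a ^ (2 * n) * Real.Gamma ((n : ℝ) + ν + 1 - p) /
          (Real.Gamma ((n : ℝ) + 1) * Real.Gamma ((n : ℝ) + ν + 1) * (2 * t) ^ n)
      = (2 * t) ^ (-p) * Real.exp (-a ^ 2 / (2 * t)) * ∑' n, f n := by rw [hf]
    _ ≤ (2 * t) ^ (-p) * (K + S * t⁻¹) := step1
    _ ≤ K * (2 * t) ^ (-p) + (S + 1) * t ^ (-1 - p) := step2
end

section
/- Let ν > 0, a > 0, and 0 < p < 1 + ν. Then for every y > 0 and t > 0, ∫_0^∞ y^{-2p} (1/t) (y/a)^ν y e^{-(a²+y²)/(2t)} I_ν(a y / t) dy = (2t)^{-p} e^{-a²/(2t)} Σ_{n=0}^∞ a^{2n} Γ(n+ν+1-p) / (Γ(n+1) Γ(n+ν+1) (2t)^n), where I_ν(z) = (z/2)^ν Σ_{n=0}^∞ (z/2)^{2n} / (Γ(n+1) Γ(1+ν+n)) is the modified Bessel function of the first kind. -/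
open Real MeasureTheory

/-- The modified Bessel function of the first kind, defined by its power
series, for positive real arguments. -/
noncomputable def besselI (ν z : ℝ) : ℝ :=
  (z / 2) ^ ν * ∑' n : ℕ, (z / 2) ^ (2 * n) / (Real.Gamma (n + 1) * Real.Gamma (1 + ν + n))

/-- The `(-2p)`-th moment of the Bessel process transition density equals the
explicit series expression, by termwise integration. -/
theorem moment_integral_eq_series (ν a p t : ℝ) (hν : 0 < ν) (ha : 0 < a)
    (hp0 : 0 < p) (hp1 : p < 1 + ν) (ht : 0 < t) :
    ∫ y in Set.Ioi (0 : ℝ),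
        y ^ (-(2 * p)) * (1 / t) * (y / a) ^ ν * y *
          Real.exp (-(a ^ 2 + y ^ 2) / (2 * t)) * besselI ν (a * y / t) =
    (2 * t) ^ (-p) * Real.exp (-a ^ 2 / (2 * t)) *
      ∑' n : ℕ, a ^ (2 * n) * Real.Gamma (n + ν + 1 - p) /
        (Real.Gamma (n + 1) * Real.Gamma (n + ν + 1) * (2 * t) ^ n) := by
  have h2t : (0:ℝ) < 2 * t := by linarith
  set b : ℝ := 1 / (2 * t) with hbdef
  have hb : 0 < b := by rw [hbdef]; positivity
  set s : ℕ → ℝ := fun n => 2 * n + 2 * ν + 1 - 2 * p with hs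
  set c : ℕ → ℝ := fun n =>
    Real.exp (-a ^ 2 / (2 * t)) * (1 / t) * (2 * t) ^ (-ν) * (a / (2 * t)) ^ (2 * n) /
      (Real.Gamma (n + 1) * Real.Gamma (1 + ν + n)) with hc
  set F : ℕ → ℝ → ℝ := fun n y => c n * (y ^ s n * Real.exp (-b * y ^ (2:ℝ))) with hF
  have hs_neg : ∀ n : ℕ, (-1:ℝ) < s n := by
    intro n
    have h0 : (0:ℝ) ≤ n := Nat.cast_nonneg n
    simp only [hs]
    linarith
  have hargpos : ∀ m : ℕ, (0:ℝ) < (m:ℝ) + ν + 1 - p := by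
    intro m
    have h0 : (0:ℝ) ≤ m := Nat.cast_nonneg m
    linarith
  have hG1pos : ∀ m : ℕ, 0 < Real.Gamma ((m:ℝ) + 1) := fun m =>
    Real.Gamma_pos_of_pos (by positivity)
  have hG2pos : ∀ m : ℕ, 0 < Real.Gamma ((m:ℝ) + ν + 1) := fun m =>
    Real.Gamma_pos_of_pos (by have h0 : (0:ℝ) ≤ m := Nat.cast_nonneg m; linarith)
  have hGcomm : ∀ m : ℕ, Real.Gamma (1 + ν + (m:ℝ)) = Real.Gamma ((m:ℝ) + ν + 1) := by
    intro m
    rw [show (1:ℝ) + ν + (m:ℝ) = (m:ℝ) + ν + 1 from by ring]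
  -- pointwise identity
  have key : ∀ y : ℝ, y ∈ Set.Ioi (0:ℝ) →
      y ^ (-(2 * p)) * (1 / t) * (y / a) ^ ν * y *
        Real.exp (-(a ^ 2 + y ^ 2) / (2 * t)) * besselI ν (a * y / t)
      = ∑' n : ℕ, F n y := by
    intro y hy
    rw [Set.mem_Ioi] at hy
    simp only [besselI]
    rw [← tsum_mul_left, ← tsum_mul_left]
    refine tsum_congr fun n => ?_
    have hz : a * y / t / 2 = a / (2 * t) * y := by ring
    have e2 : y ^ (2:ℝ) = y ^ (2:ℕ) := Real.rpow_two y
    have eexp : Real.exp (-(a ^ 2 + y ^ 2) / (2 * t))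
        = Real.exp (-a ^ 2 / (2 * t)) * Real.exp (-b * y ^ (2:ℝ)) := by
      rw [← Real.exp_add]
      congr 1
      rw [e2, hbdef]
      field_simp
      ring
    have e4 : (a / (2 * t) * y) ^ (2 * n) = (a / (2 * t)) ^ (2 * n) * y ^ (2 * n) :=
      mul_pow _ _ _
    have e3 : (y / a) ^ ν * (a / (2 * t) * y) ^ ν = y ^ (2 * ν) * (2 * t) ^ (-ν) := by
      rw [← Real.mul_rpow (by positivity) (by positivity)]
      have h5 : y / a * (a / (2 * t) * y) = y ^ (2:ℕ) * (2 * t)⁻¹ := by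
        field_simp
      rw [h5, Real.mul_rpow (by positivity) (by positivity), Real.inv_rpow h2t.le,
        ← Real.rpow_neg h2t.le, ← Real.rpow_natCast y 2, ← Real.rpow_mul hy.le]
      norm_num
    have epow : y ^ (-(2 * p)) * y ^ (2 * ν) * y * y ^ (((2 * n : ℕ)):ℝ) = y ^ s n := by
      calc y ^ (-(2 * p)) * y ^ (2 * ν) * y * y ^ (((2 * n : ℕ)):ℝ)
          = y ^ (-(2 * p) + 2 * ν) * y * y ^ (((2 * n : ℕ)):ℝ) := by
            rw [← Real.rpow_add hy]
        _ = y ^ (-(2 * p) + 2 * ν + 1) * y ^ (((2 * n : ℕ)):ℝ) := by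
            rw [Real.rpow_add_one hy.ne']
        _ = y ^ (-(2 * p) + 2 * ν + 1 + ((2 * n : ℕ):ℝ)) := by
            rw [← Real.rpow_add hy]
        _ = y ^ s n := by
            congr 1
            simp only [hs]
            push_cast
            ring
    simp only [hF]
    rw [hz, eexp, e4, ← Real.rpow_natCast y (2 * n), ← epow]
    simp only [hc]
    linear_combination (y ^ (-(2 * p)) * (1 / t) * y * Real.exp (-a ^ 2 / (2 * t)) *
      Real.exp (-b * y ^ (2:ℝ)) * ((a / (2 * t)) ^ (2 * n) * y ^ (((2 * n : ℕ)):ℝ)) /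
      (Real.Gamma ((n:ℝ) + 1) * Real.Gamma (1 + ν + (n:ℝ)))) * e3
  -- integrability
  have hFint : ∀ n : ℕ, IntegrableOn (F n) (Set.Ioi (0:ℝ)) := by
    intro n
    simp only [hF]
    exact (integrableOn_rpow_mul_exp_neg_mul_rpow (hs_neg n) two_pos hb).const_mul (c n)
  -- value of each integral
  have hint : ∀ n : ℕ, ∫ y in Set.Ioi (0:ℝ), F n y
      = (2 * t) ^ (-p) * Real.exp (-a ^ 2 / (2 * t)) *
          (a ^ (2 * n) * Real.Gamma ((n:ℝ) + ν + 1 - p) /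
            (Real.Gamma ((n:ℝ) + 1) * Real.Gamma ((n:ℝ) + ν + 1) * (2 * t) ^ n)) := by
    intro n
    simp only [hF]
    rw [MeasureTheory.integral_const_mul, integral_rpow_mul_exp_neg_mul_rpow (by norm_num : (0:ℝ) < 2)
      (hs_neg n) hb]
    have harg : (s n + 1) / 2 = (n:ℝ) + ν + 1 - p := by simp only [hs]; ring
    have harg2 : -(s n + 1) / 2 = -((n:ℝ) + ν + 1 - p) := by simp only [hs]; ring
    rw [harg, harg2]
    have hbp : b ^ (-((n:ℝ) + ν + 1 - p)) = (2 * t) ^ ((n:ℝ) + ν + 1 - p) := by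
      rw [hbdef, one_div, Real.inv_rpow h2t.le, ← Real.rpow_neg h2t.le, neg_neg]
    rw [hbp]
    have hexp2 : ∀ x : ℝ, x ^ (2 * n) = x ^ n * x ^ n := fun x => by rw [two_mul, pow_add]
    have hsplit : (2 * t) ^ (-ν) * (2 * t) ^ ((n:ℝ) + ν + 1 - p)
        = (2 * t) ^ (n:ℕ) * (2 * t) * (2 * t) ^ (-p) := by
      rw [← Real.rpow_add h2t, show -ν + ((n:ℝ) + ν + 1 - p) = (n:ℝ) + (1 + -p) from by ring,
        Real.rpow_add h2t, Real.rpow_add h2t, Real.rpow_natCast, Real.rpow_one]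
      ring
    have h3 : ((2 * t) ^ n : ℝ) ≠ 0 := pow_ne_zero _ h2t.ne'
    calc c n * ((2 * t) ^ ((n:ℝ) + ν + 1 - p) * (1 / 2) * Real.Gamma ((n:ℝ) + ν + 1 - p))
        = ((2 * t) ^ (-ν) * (2 * t) ^ ((n:ℝ) + ν + 1 - p)) *
            (Real.exp (-a ^ 2 / (2 * t)) * (1 / t) * (a ^ (2 * n) / (2 * t) ^ (2 * n)) *
              (1 / 2) * Real.Gamma ((n:ℝ) + ν + 1 - p) /
              (Real.Gamma ((n:ℝ) + 1) * Real.Gamma ((n:ℝ) + ν + 1))) := by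
          simp only [hc]
          rw [hGcomm n, div_pow]
          ring
      _ = ((2 * t) ^ (n:ℕ) * (2 * t) * (2 * t) ^ (-p)) *
            (Real.exp (-a ^ 2 / (2 * t)) * (1 / t) * (a ^ (2 * n) / (2 * t) ^ (2 * n)) *
              (1 / 2) * Real.Gamma ((n:ℝ) + ν + 1 - p) /
              (Real.Gamma ((n:ℝ) + 1) * Real.Gamma ((n:ℝ) + ν + 1))) := by rw [hsplit]
      _ = (2 * t) ^ (-p) * Real.exp (-a ^ 2 / (2 * t)) *
            (a ^ (2 * n) * Real.Gamma ((n:ℝ) + ν + 1 - p) /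
              (Real.Gamma ((n:ℝ) + 1) * Real.Gamma ((n:ℝ) + ν + 1) * (2 * t) ^ n)) := by
          rw [hexp2 (2 * t)]
          field_simp
  -- norms
  have hnorm : ∀ n : ℕ, (∫ y in Set.Ioi (0:ℝ), ‖F n y‖) = ∫ y in Set.Ioi (0:ℝ), F n y := by
    intro n
    refine setIntegral_congr_fun measurableSet_Ioi fun y hy => ?_
    rw [Set.mem_Ioi] at hy
    have hcn : 0 ≤ c n := by
      simp only [hc]
      have := hG1pos n
      have hg2 : 0 < Real.Gamma (1 + ν + (n:ℝ)) := by rw [hGcomm n]; exact hG2pos n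
      positivity
    simp only [hF]
    rw [Real.norm_eq_abs, abs_of_nonneg]
    exact mul_nonneg hcn (mul_nonneg (Real.rpow_nonneg hy.le _) (Real.exp_nonneg _))
  -- summability
  have hGamma_le : ∀ n : ℕ, 2 ≤ n →
      Real.Gamma ((n:ℝ) + ν + 1 - p) ≤ Real.Gamma ((n:ℝ) + ν + 1) := by
    intro n hn
    have h2le : (2:ℝ) ≤ (n:ℝ) := by exact_mod_cast hn
    exact Real.Gamma_strictMonoOn_Ici.monotoneOn
      (Set.mem_Ici.mpr (by linarith)) (Set.mem_Ici.mpr (by linarith)) (by linarith)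
  have hsum : Summable (fun n : ℕ => a ^ (2 * n) * Real.Gamma ((n:ℝ) + ν + 1 - p) /
      (Real.Gamma ((n:ℝ) + 1) * Real.Gamma ((n:ℝ) + ν + 1) * (2 * t) ^ n)) := by
    rw [← summable_nat_add_iff 2]
    refine Summable.of_nonneg_of_le (fun n => ?_) (fun n => ?_)
      ((summable_nat_add_iff 2).mpr (Real.summable_pow_div_factorial (a ^ 2 / (2 * t))))
    · have hd := mul_pos (mul_pos (hG1pos (n + 2)) (hG2pos (n + 2))) (pow_pos h2t (n + 2))
      exact div_nonneg (mul_nonneg (by positivity) (Real.Gamma_pos_of_pos (hargpos (n + 2))).le)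
        hd.le
    · have hd := mul_pos (mul_pos (hG1pos (n + 2)) (hG2pos (n + 2))) (pow_pos h2t (n + 2))
      calc a ^ (2 * (n + 2)) * Real.Gamma ((↑(n + 2):ℝ) + ν + 1 - p) /
            (Real.Gamma ((↑(n + 2):ℝ) + 1) * Real.Gamma ((↑(n + 2):ℝ) + ν + 1) *
              (2 * t) ^ (n + 2))
          ≤ a ^ (2 * (n + 2)) * Real.Gamma ((↑(n + 2):ℝ) + ν + 1) /
            (Real.Gamma ((↑(n + 2):ℝ) + 1) * Real.Gamma ((↑(n + 2):ℝ) + ν + 1) *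
              (2 * t) ^ (n + 2)) := by
            exact (div_le_div_iff_of_pos_right hd).mpr
              (mul_le_mul_of_nonneg_left (hGamma_le (n + 2) (by omega)) (by positivity))
        _ = (a ^ 2 / (2 * t)) ^ (n + 2) / (Nat.factorial (n + 2) : ℝ) := by
            rw [Real.Gamma_nat_eq_factorial, div_pow, pow_mul]
            have hf : (Nat.factorial (n + 2) : ℝ) ≠ 0 := Nat.cast_ne_zero.mpr (Nat.factorial_ne_zero _)
            field_simp
  -- assembly
  rw [setIntegral_congr_fun measurableSet_Ioi key,
    ← integral_tsum_of_summable_integral_norm hFint ?_]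
  · calc (∑' n : ℕ, ∫ y in Set.Ioi (0:ℝ), F n y)
        = ∑' n : ℕ, (2 * t) ^ (-p) * Real.exp (-a ^ 2 / (2 * t)) *
            (a ^ (2 * n) * Real.Gamma ((n:ℝ) + ν + 1 - p) /
              (Real.Gamma ((n:ℝ) + 1) * Real.Gamma ((n:ℝ) + ν + 1) * (2 * t) ^ n)) :=
          tsum_congr hint
      _ = _ := tsum_mul_left
  · have heq : (fun n : ℕ => ∫ y in Set.Ioi (0:ℝ), ‖F n y‖)
        = fun n : ℕ => (2 * t) ^ (-p) * Real.exp (-a ^ 2 / (2 * t)) *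
            (a ^ (2 * n) * Real.Gamma ((n:ℝ) + ν + 1 - p) /
              (Real.Gamma ((n:ℝ) + 1) * Real.Gamma ((n:ℝ) + ν + 1) * (2 * t) ^ n)) :=
      funext fun n => (hnorm n).trans (hint n)
    rw [heq]
    exact hsum.mul_left _
end

section
/- Let ν > 0 and let μ be a finite measure on [0, ∞) with total mass m = μ([0,∞)) and tail bound μ((s,∞)) ≤ C s^{-ν} for s ≥ 1. Fix α ∈ (0, 1). Then for t large enough, the quantity J₂(t) = (2^ν Γ(ν+1))^{-1} ∫_{[0, t^α]} (t-s)^{-ν} dμ(s) satisfies | J₂(t) - m / (Γ(ν+1)(2t)^ν) | ≤ C'' t^{-ν} ( t^{-αν} + t^{-(1-α)} ) for a constant C'' independent of t. -/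
open Real MeasureTheory

/-- Elementary inequality: for `0 < u` with `2*p*u ≤ 1`, `1 ≤ p`, `0 < ν ≤ p`,
`(1-u)^(-ν) ≤ 1 + 2*p*u`. -/
lemma one_sub_rpow_neg_le {ν p u : ℝ} (hν : 0 < ν) (hp : 1 ≤ p) (hνp : ν ≤ p)
    (hu : 0 < u) (hpu : 2 * p * u ≤ 1) : (1 - u) ^ (-ν) ≤ 1 + 2 * p * u := by
  have hp0 : 0 < p := lt_of_lt_of_le one_pos hp
  have hu1 : u < 1 := by nlinarith
  have h1u : 0 < 1 - u := by linarith
  have hbern : 1 + p * (-u) ≤ (1 + (-u)) ^ p :=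
    one_add_mul_self_le_rpow_one_add (by linarith) hp
  have hmono : (1 - u) ^ p ≤ (1 - u) ^ ν :=
    Real.rpow_le_rpow_of_exponent_ge h1u (by linarith) hνp
  have hlow : 1 - p * u ≤ (1 - u) ^ ν := by
    have h : (1 : ℝ) + (-u) = 1 - u := by ring
    rw [h] at hbern; nlinarith
  have hposν : 0 < (1 - u) ^ ν := Real.rpow_pos_of_pos h1u ν
  rw [Real.rpow_neg h1u.le, inv_le_iff_one_le_mul₀ hposν]
  nlinarith [mul_pos hp0 hu]

/-- Core arithmetic estimate combining the integral and measure bounds. -/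
lemma J2_abs_aux {C m p tν tαν u I μI K : ℝ}
    (hC0 : 0 ≤ C) (hm0 : 0 ≤ m) (hp0 : 0 < p) (htν : 0 < tν) (htαν : 0 < tαν)
    (hu0 : 0 < u) (hμI0 : 0 ≤ μI)
    (hIup : I ≤ μI * K) (hK0 : 0 ≤ K) (hK : K ≤ tν * (1 + 2 * p * u))
    (hIlo : μI * tν ≤ I) (hμIle : μI ≤ m) (hμIge : m - C * tαν ≤ μI) :
    |I - m * tν| ≤ max (2 * p * m) C * (tν * (tαν + u)) := by
  have hmax1 : 2 * p * m ≤ max (2 * p * m) C := le_max_left _ _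
  have hmax2 : C ≤ max (2 * p * m) C := le_max_right _ _
  have hmax0 : 0 ≤ max (2 * p * m) C := le_trans hC0 hmax2
  rw [abs_le]
  constructor
  · nlinarith [mul_pos htν hu0, mul_pos htν htαν,
      mul_nonneg hmax0 (mul_pos htν hu0).le,
      mul_le_mul_of_nonneg_right hμIge htν.le,
      mul_le_mul_of_nonneg_right hmax2 (mul_pos htν htαν).le]
  · nlinarith [mul_pos htν hu0, mul_pos htν htαν,
      mul_nonneg hmax0 (mul_pos htν htαν).le,
      mul_le_mul_of_nonneg_right hμIle hK0,
      mul_le_mul_of_nonneg_left hK hm0,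
      mul_le_mul_of_nonneg_right hmax1 (mul_pos htν hu0).le]

/-- The two-sided estimate of the term `J₂`: for a finite measure `μ` on
`[0,∞)` with total mass `m` and polynomial tail bound,
`J₂(t) = (2^ν Γ(ν+1))⁻¹ ∫_{[0,t^α]} (t-s)^{-ν} dμ(s)` equals
`m/(Γ(ν+1)(2t)^ν)` up to an error `O(t^{-ν}(t^{-αν} + t^{-(1-α)}))`. -/
theorem J2_estimate (ν : ℝ) (μ : Measure ℝ) [IsFiniteMeasure μ]
    (C α : ℝ) (hν : 0 < ν) (hsupp : μ (Set.Iio 0) = 0)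
    (htail : ∀ s ≥ (1 : ℝ), (μ (Set.Ioi s)).toReal ≤ C * s ^ (-ν))
    (hα : α ∈ Set.Ioo (0 : ℝ) 1) :
    ∃ C'' T, ∀ t ≥ T,
      |(2 ^ ν * Real.Gamma (ν + 1))⁻¹ *
          ∫ s in Set.Icc 0 (t ^ α), (t - s) ^ (-ν) ∂μ -
        (μ Set.univ).toReal / (Real.Gamma (ν + 1) * (2 * t) ^ ν)| ≤
      C'' * t ^ (-ν) * (t ^ (-α * ν) + t ^ (-(1 - α))) := by
  obtain ⟨hα0, hα1⟩ := hα
  set p := max ν 1 with hpdef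
  have hp1 : 1 ≤ p := le_max_right _ _
  have hνp : ν ≤ p := le_max_left _ _
  have hp0 : 0 < p := lt_of_lt_of_le one_pos hp1
  set m := (μ Set.univ).toReal with hmdef
  have hm0 : 0 ≤ m := ENNReal.toReal_nonneg
  have hC0 : 0 ≤ C := by
    have h := htail 1 le_rfl
    simpa using le_trans ENNReal.toReal_nonneg h
  have hΓ : 0 < Real.Gamma (ν + 1) := Real.Gamma_pos_of_pos (by linarith)
  have hG : 0 < 2 ^ ν * Real.Gamma (ν + 1) :=
    mul_pos (Real.rpow_pos_of_pos two_pos ν) hΓ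
  set G := 2 ^ ν * Real.Gamma (ν + 1) with hGdef
  refine ⟨G⁻¹ * max (2 * p * m) C, (2 * p) ^ (1 - α)⁻¹, fun t ht => ?_⟩
  have h1α : 0 < 1 - α := by linarith
  have hT1 : (1 : ℝ) ≤ (2 * p) ^ (1 - α)⁻¹ :=
    Real.one_le_rpow (by linarith) (by positivity)
  have ht1 : 1 ≤ t := le_trans hT1 ht
  have ht0 : 0 < t := lt_of_lt_of_le one_pos ht1
  have htα : 2 * p ≤ t ^ (1 - α) := by
    have h := Real.rpow_le_rpow (by positivity) ht h1α.le
    rwa [← Real.rpow_mul (by positivity), inv_mul_cancel₀ h1α.ne',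
      Real.rpow_one] at h
  set u := t ^ (-(1 - α)) with hudef
  have hu0 : 0 < u := Real.rpow_pos_of_pos ht0 _
  have h2pu : 2 * p * u ≤ 1 := by
    have h2 : u = (t ^ (1 - α))⁻¹ := by rw [hudef, Real.rpow_neg ht0.le]
    have hpos : 0 < t ^ (1 - α) := Real.rpow_pos_of_pos ht0 _
    rw [h2, mul_inv_le_iff₀ hpos, one_mul]
    linarith
  set x := t ^ α with hxdef
  have hx1 : 1 ≤ x := Real.one_le_rpow ht1 hα0.le
  have hx0 : 0 ≤ x := by linarith
  have hxtu : x = t * u := by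
    have h : t * u = t ^ (1 + -(1 - α)) := by
      rw [Real.rpow_add ht0, Real.rpow_one]
    rw [h, hxdef]; congr 1; ring
  have hxlt : x < t := by
    have hu1 : u < 1 := by nlinarith
    calc x = t * u := hxtu
    _ < t * 1 := mul_lt_mul_of_pos_left hu1 ht0
    _ = t := mul_one t
  have htx0 : 0 < t - x := by linarith
  have htν : 0 < t ^ (-ν) := Real.rpow_pos_of_pos ht0 _
  have htαν : 0 < t ^ (-α * ν) := Real.rpow_pos_of_pos ht0 _
  -- key upper bound on (t - x)^(-ν)
  have hkey : (t - x) ^ (-ν) ≤ t ^ (-ν) * (1 + 2 * p * u) := by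
    have h1 : t - x = t * (1 - u) := by rw [hxtu]; ring
    have h1u : 0 ≤ 1 - u := by nlinarith
    have h2 : (t * (1 - u)) ^ (-ν) = t ^ (-ν) * (1 - u) ^ (-ν) :=
      Real.mul_rpow ht0.le h1u
    rw [h1, h2]
    exact mul_le_mul_of_nonneg_left
      (one_sub_rpow_neg_le hν hp1 hνp hu0 h2pu) htν.le
  -- pointwise bounds on the integrand over [0, x]
  have hptle : ∀ s ∈ Set.Icc 0 x, (t - s) ^ (-ν) ≤ (t - x) ^ (-ν) := by
    intro s hs
    exact Real.rpow_le_rpow_of_nonpos htx0 (by linarith [hs.2]) (by linarith)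
  have hptge : ∀ s ∈ Set.Icc 0 x, t ^ (-ν) ≤ (t - s) ^ (-ν) := by
    intro s hs
    have : 0 < t - s := by linarith [hs.2, hxlt]
    exact Real.rpow_le_rpow_of_nonpos this (by linarith [hs.1]) (by linarith)
  -- integrability
  have hmeas : Measurable fun s : ℝ => (t - s) ^ (-ν) := by fun_prop
  have hint : IntegrableOn (fun s : ℝ => (t - s) ^ (-ν)) (Set.Icc 0 x) μ := by
    refine Measure.integrableOn_of_bounded (M := (t - x) ^ (-ν))
      (measure_ne_top μ _) hmeas.aestronglyMeasurable ?_
    refine (ae_restrict_iff' measurableSet_Icc).2 (ae_of_all _ fun s hs => ?_)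
    rw [Real.norm_eq_abs, abs_of_nonneg (Real.rpow_nonneg (by linarith [hs.2, hxlt]) _)]
    exact hptle s hs
  set I := ∫ s in Set.Icc 0 x, (t - s) ^ (-ν) ∂μ with hIdef
  set μI := (μ (Set.Icc 0 x)).toReal with hμIdef
  have hμI0 : 0 ≤ μI := ENNReal.toReal_nonneg
  -- integral bounds
  have hIup : I ≤ μI * (t - x) ^ (-ν) := by
    calc I ≤ ∫ _ in Set.Icc 0 x, (t - x) ^ (-ν) ∂μ :=
          setIntegral_mono_on hint (integrableOn_const (measure_ne_top μ _))
            measurableSet_Icc hptle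
      _ = μI * (t - x) ^ (-ν) := by rw [setIntegral_const, smul_eq_mul, measureReal_def]
  have hIlo : μI * t ^ (-ν) ≤ I := by
    calc μI * t ^ (-ν) = ∫ _ in Set.Icc 0 x, t ^ (-ν) ∂μ := by
          rw [setIntegral_const, smul_eq_mul, measureReal_def]
      _ ≤ I := setIntegral_mono_on
            (integrableOn_const (measure_ne_top μ _))
            hint measurableSet_Icc hptge
  -- measure bounds
  have hμIle : μI ≤ m :=
    ENNReal.toReal_mono (measure_ne_top μ _) (measure_mono (Set.subset_univ _))
  have htail' : (μ (Set.Ioi x)).toReal ≤ C * t ^ (-α * ν) := by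
    have h := htail x hx1
    have hx : x ^ (-ν) = t ^ (-α * ν) := by
      rw [hxdef, ← Real.rpow_mul ht0.le]; congr 1; ring
    rwa [hx] at h
  have hμIge : m - C * t ^ (-α * ν) ≤ μI := by
    have hsub : Set.univ ⊆ Set.Iio 0 ∪ (Set.Icc 0 x ∪ Set.Ioi x) := by
      intro s _
      rcases lt_or_ge s 0 with h | h
      · exact Or.inl h
      · rcases le_or_gt s x with h2 | h2
        · exact Or.inr (Or.inl ⟨h, h2⟩)
        · exact Or.inr (Or.inr h2)
    have h1 : μ Set.univ ≤ μ (Set.Icc 0 x) + μ (Set.Ioi x) := by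
      calc μ Set.univ ≤ μ (Set.Iio 0 ∪ (Set.Icc 0 x ∪ Set.Ioi x)) :=
            measure_mono hsub
        _ ≤ μ (Set.Iio 0) + (μ (Set.Icc 0 x) + μ (Set.Ioi x)) :=
            le_trans (measure_union_le _ _) (by gcongr; exact measure_union_le _ _)
        _ = μ (Set.Icc 0 x) + μ (Set.Ioi x) := by rw [hsupp, zero_add]
    have h2 : m ≤ μI + (μ (Set.Ioi x)).toReal := by
      have h3 := ENNReal.toReal_mono (by finiteness) h1
      rwa [ENNReal.toReal_add (measure_ne_top μ _) (measure_ne_top μ _)] at h3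
    linarith
  -- rewrite the target constant term
  have hconst : m / (Real.Gamma (ν + 1) * (2 * t) ^ ν) = G⁻¹ * (m * t ^ (-ν)) := by
    have h2t : (2 * t) ^ ν = 2 ^ ν * t ^ ν := Real.mul_rpow (by norm_num) ht0.le
    have htν' : t ^ (-ν) = (t ^ ν)⁻¹ := Real.rpow_neg ht0.le ν
    rw [hGdef, h2t, htν', div_eq_mul_inv]
    simp only [mul_inv]
    ring
  have hK0 : (0:ℝ) ≤ (t - x) ^ (-ν) := Real.rpow_nonneg htx0.le _
  have habs := J2_abs_aux hC0 hm0 hp0 htν htαν hu0 hμI0 hIup hK0 hkey hIlo hμIle hμIge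
  rw [hconst, ← mul_sub, abs_mul, abs_of_pos (inv_pos.2 hG)]
  calc G⁻¹ * |I - m * t ^ (-ν)| ≤
      G⁻¹ * (max (2 * p * m) C * (t ^ (-ν) * (t ^ (-α * ν) + u))) :=
        mul_le_mul_of_nonneg_left habs (inv_pos.2 hG).le
    _ = G⁻¹ * max (2 * p * m) C * t ^ (-ν) * (t ^ (-α * ν) + t ^ (-(1 - α))) := by
        rw [hudef]; ring
end
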